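/- Let g be a nonnegative measurable function on a disk D ⊂ ℝ² and suppose for a unit vector v ∈ ℝ² there exist δ_v > 0, e_v ∈ {0,1}, and constants a, b, c > 0 such that for 0 < r < c, a·r^{δ_v}|ln r|^{e_v} ≤ ∫_{{x ∈ D : |x·v| < r}} g ≤ b·r^{δ_v}|ln r|^{e_v}. If δ_v < 1/3, then there is C > 0 such that for all λ ≥ 2, ∫_D min(1, |λ·(x·v)|^{-1/3}) g(x) dx ≤ C·λ^{-δ_v}·(ln λ)^{e_v}. -/

import Mathlib

set_option maxHeartbeats 1000000


open MeasureTheory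

/-- Step from (5.18) to (5.19): a two-sided slab-measure estimate
`a r^δ |ln r|^e ≤ ∫_{|x·v| < r} g ≤ b r^δ |ln r|^e` with `δ < 1/3` implies
`∫_D min(1, |λ (x·v)|^{-1/3}) g ≤ C λ^{-δ} (ln λ)^e` for λ ≥ 2. -/
theorem stmt_15 (ctr : ℝ × ℝ) (R : ℝ) (hR : 0 < R) (g : ℝ × ℝ → ℝ)
    (hg : Measurable g) (hg0 : ∀ x, 0 ≤ g x)
    (hgint : IntegrableOn g (Metric.ball ctr R))
    (v : ℝ × ℝ) (hv : ‖v‖ = 1) (δ : ℝ) (e : ℕ) (a b c : ℝ)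
    (hδ : 0 < δ) (hδ' : δ < 1 / 3) (he : e ≤ 1)
    (ha : 0 < a) (hb : 0 < b) (hc : 0 < c)
    (hslab : ∀ r : ℝ, 0 < r → r < c →
      a * r ^ δ * |Real.log r| ^ e ≤
        (∫ x in {x ∈ Metric.ball ctr R | |x.1 * v.1 + x.2 * v.2| < r}, g x) ∧
      (∫ x in {x ∈ Metric.ball ctr R | |x.1 * v.1 + x.2 * v.2| < r}, g x) ≤
        b * r ^ δ * |Real.log r| ^ e) :
    ∃ C > (0 : ℝ), ∀ lam : ℝ, 2 ≤ lam →
      (∫ x in Metric.ball ctr R,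
          min 1 (|lam * (x.1 * v.1 + x.2 * v.2)| ^ (-(1 / 3 : ℝ))) * g x) ≤
        C * lam ^ (-δ) * (Real.log lam) ^ e := by
  classical
  have hD : MeasurableSet (Metric.ball ctr R) := Metric.isOpen_ball.measurableSet
  have ht : Measurable (fun x : ℝ × ℝ => x.1 * v.1 + x.2 * v.2) :=
    (measurable_fst.mul measurable_const).add (measurable_snd.mul measurable_const)
  set I : ℝ := ∫ x in Metric.ball ctr R, g x with hIdef
  have hI0 : 0 ≤ I := setIntegral_nonneg hD fun x _ => hg0 x
  have hlog2pos : (0:ℝ) < Real.log 2 := Real.log_pos (by norm_num)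
  have hlog2lt1 : Real.log 2 ≤ 1 := by
    have := Real.log_two_lt_d9; linarith
  set K : ℝ := b + I / (c ^ δ * Real.log 2) with hKdef
  have hKb : I / (c ^ δ * Real.log 2) ≤ K := by
    have : 0 < b := hb; simp only [hKdef]; linarith
  have hK : 0 < K := by
    have h1 : 0 ≤ I / (c ^ δ * Real.log 2) := by positivity
    simp only [hKdef]; linarith
  set q : ℝ := (2:ℝ) ^ (δ - 1/3) with hqdef
  have hq0 : 0 ≤ q := (Real.rpow_pos_of_pos (by norm_num) _).le
  have hq1 : q < 1 := Real.rpow_lt_one_of_one_lt_of_neg (by norm_num) (by linarith)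
  have hsummable : Summable (fun k : ℕ => ((k:ℝ) + 2) * q ^ k) := by
    have h1 : Summable (fun k : ℕ => (k:ℝ) ^ 1 * q ^ k) :=
      summable_pow_mul_geometric_of_norm_lt_one 1
        (by rwa [Real.norm_eq_abs, abs_of_nonneg hq0])
    have h2 : Summable (fun k : ℕ => (2:ℝ) * q ^ k) :=
      (summable_geometric_of_lt_one hq0 hq1).mul_left 2
    exact (h1.add h2).congr fun k => by ring
  set S : ℝ := ∑' k : ℕ, ((k:ℝ) + 2) * q ^ k with hSdef
  have hS0 : 0 ≤ S := tsum_nonneg fun k => by positivity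
  refine ⟨K * (1 + (2:ℝ) ^ (δ:ℝ) * S), by positivity, ?_⟩
  intro lam hlam
  have hlam0 : (0:ℝ) < lam := by linarith
  have hloglam : (0:ℝ) < Real.log lam := Real.log_pos (by linarith)
  have hlog2lam : Real.log 2 ≤ Real.log lam := Real.log_le_log (by norm_num) hlam
  have hloge : Real.log 2 ≤ Real.log lam ^ e := by
    interval_cases e
    · simpa using hlog2lt1
    · simpa using hlog2lam
  have hloge0 : 0 ≤ Real.log lam ^ e := by positivity
  set T : ℝ := lam ^ (-δ) * Real.log lam ^ e with hTdef
  have hrpowlam : 0 < lam ^ (-δ) := Real.rpow_pos_of_pos hlam0 _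
  have hT0 : 0 < T := by positivity
  -- the slabs
  set A : ℕ → Set (ℝ × ℝ) :=
    fun j => {x ∈ Metric.ball ctr R | |x.1 * v.1 + x.2 * v.2| < (2:ℝ) ^ j / lam} with hAdef
  have hAm : ∀ j, MeasurableSet (A j) := fun j =>
    hD.inter (measurableSet_lt ht.abs measurable_const)
  have hAsub : ∀ j, A j ⊆ Metric.ball ctr R := fun j x hx => hx.1
  have hAmono : ∀ j, A j ⊆ A (j+1) := by
    intro j x hx
    refine ⟨hx.1, lt_of_lt_of_le hx.2 ?_⟩
    have h2 : ((2:ℝ)^j ≤ 2^(j+1)) := by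
      rw [pow_succ]; nlinarith [pow_pos (show (0:ℝ) < 2 by norm_num) j]
    gcongr
  have hgA : ∀ j, IntegrableOn g (A j) := fun j => hgint.mono_set (hAsub j)
  -- the damped integrand
  set h : ℝ × ℝ → ℝ :=
    fun x => min 1 (|lam * (x.1 * v.1 + x.2 * v.2)| ^ (-(1 / 3 : ℝ))) * g x with hhdef
  have hmin0 : ∀ x : ℝ × ℝ,
      0 ≤ min 1 (|lam * (x.1 * v.1 + x.2 * v.2)| ^ (-(1 / 3 : ℝ))) := by
    intro x
    exact le_min zero_le_one (Real.rpow_nonneg (abs_nonneg _) _)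
  have hh0 : ∀ x, 0 ≤ h x := fun x => mul_nonneg (hmin0 x) (hg0 x)
  have hhle : ∀ x, h x ≤ g x := by
    intro x
    calc h x ≤ 1 * g x := mul_le_mul_of_nonneg_right (min_le_left _ _) (hg0 x)
    _ = g x := one_mul _
  have hhm : Measurable h := by
    apply Measurable.mul _ hg
    apply Measurable.min measurable_const
    exact ((measurable_const.mul ht).abs).pow measurable_const
  have hhint : IntegrableOn h (Metric.ball ctr R) := by
    refine Integrable.mono hgint hhm.aestronglyMeasurable ?_
    filter_upwards with x
    rw [Real.norm_eq_abs, Real.norm_eq_abs, abs_of_nonneg (hh0 x), abs_of_nonneg (hg0 x)]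
    exact hhle x
  have hhA : ∀ s : Set (ℝ × ℝ), s ⊆ Metric.ball ctr R → IntegrableOn h s :=
    fun s hs => hhint.mono_set hs
  -- key upper bound for slab integrals
  have keyF : ∀ j : ℕ, (∫ x in A j, g x) ≤
      K * ((2:ℝ) ^ j) ^ (δ:ℝ) * ((j:ℝ) + 1) * T := by
    intro j
    have h2j : (0:ℝ) < (2:ℝ) ^ j := by positivity
    set r : ℝ := (2:ℝ) ^ j / lam with hrdef
    have hr0 : 0 < r := by positivity
    have hrδ : r ^ (δ:ℝ) = ((2:ℝ) ^ j) ^ (δ:ℝ) * lam ^ (-δ) := by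
      rw [hrdef, Real.div_rpow h2j.le hlam0.le, Real.rpow_neg hlam0.le, div_eq_mul_inv]
    by_cases hrc : r < c
    · have hF := (hslab r hr0 hrc).2
      have hAr : A j = {x ∈ Metric.ball ctr R | |x.1 * v.1 + x.2 * v.2| < r} := rfl
      rw [hAr]
      have hlogr : |Real.log r| ≤ ((j:ℝ) + 1) * Real.log lam := by
        have : Real.log r = (j:ℝ) * Real.log 2 - Real.log lam := by
          rw [hrdef, Real.log_div (by positivity) (by positivity), Real.log_pow]
        rw [this]
        calc |(j:ℝ) * Real.log 2 - Real.log lam|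
            ≤ |(j:ℝ) * Real.log 2| + |Real.log lam| := abs_sub _ _
          _ = (j:ℝ) * Real.log 2 + Real.log lam := by
              rw [abs_of_nonneg (by positivity), abs_of_nonneg hloglam.le]
          _ ≤ (j:ℝ) * Real.log lam + Real.log lam := by
              have : (j:ℝ) * Real.log 2 ≤ (j:ℝ) * Real.log lam :=
                mul_le_mul_of_nonneg_left hlog2lam (Nat.cast_nonneg j)
              linarith
          _ = ((j:ℝ) + 1) * Real.log lam := by ring
      have hlogre : |Real.log r| ^ e ≤ ((j:ℝ) + 1) * Real.log lam ^ e := by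
        calc |Real.log r| ^ e ≤ (((j:ℝ) + 1) * Real.log lam) ^ e :=
              pow_le_pow_left₀ (abs_nonneg _) hlogr e
          _ = ((j:ℝ) + 1) ^ e * Real.log lam ^ e := mul_pow _ _ _
          _ ≤ ((j:ℝ) + 1) * Real.log lam ^ e := by
              have hj1 : (1:ℝ) ≤ (j:ℝ) + 1 := le_add_of_nonneg_left (Nat.cast_nonneg j)
              have h1 : ((j:ℝ) + 1) ^ e ≤ (j:ℝ) + 1 := by
                calc ((j:ℝ) + 1) ^ e ≤ ((j:ℝ) + 1) ^ 1 := pow_le_pow_right₀ hj1 he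
                  _ = (j:ℝ) + 1 := pow_one _
              exact mul_le_mul_of_nonneg_right h1 hloge0
      calc (∫ x in {x ∈ Metric.ball ctr R | |x.1 * v.1 + x.2 * v.2| < r}, g x)
          ≤ b * r ^ (δ:ℝ) * |Real.log r| ^ e := hF
        _ ≤ K * r ^ (δ:ℝ) * (((j:ℝ) + 1) * Real.log lam ^ e) := by
            have hbK : b ≤ K := by
              have : 0 ≤ I / (c ^ δ * Real.log 2) := by positivity
              simp only [hKdef]; linarith
            have hrδ0 : 0 ≤ r ^ (δ:ℝ) := (Real.rpow_pos_of_pos hr0 _).le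
            have habs : 0 ≤ |Real.log r| ^ e := by positivity
            calc b * r ^ (δ:ℝ) * |Real.log r| ^ e
                ≤ K * r ^ (δ:ℝ) * |Real.log r| ^ e := by
                  apply mul_le_mul_of_nonneg_right _ habs
                  exact mul_le_mul_of_nonneg_right hbK hrδ0
              _ ≤ K * r ^ (δ:ℝ) * (((j:ℝ) + 1) * Real.log lam ^ e) := by
                  apply mul_le_mul_of_nonneg_left hlogre (by positivity)
        _ = K * ((2:ℝ) ^ j) ^ (δ:ℝ) * ((j:ℝ) + 1) * T := by
            rw [hrδ, hTdef]; ring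
    · push_neg at hrc
      have hFI : (∫ x in A j, g x) ≤ I := by
        apply setIntegral_mono_set hgint ?_ ((hAsub j).eventuallyLE)
        · filter_upwards with x using hg0 x
      have hcr : c ^ (δ:ℝ) ≤ ((2:ℝ) ^ j) ^ (δ:ℝ) * lam ^ (-δ) := by
        rw [← hrδ]; exact Real.rpow_le_rpow hc.le hrc hδ.le
      have hIle : I ≤ K * (((2:ℝ) ^ j) ^ (δ:ℝ) * lam ^ (-δ)) * (Real.log lam ^ e) := by
        have h1 : I = I / (c ^ δ * Real.log 2) * (c ^ δ * Real.log 2) := by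
          rw [div_mul_cancel₀]
          positivity
        rw [h1]
        have hKK : 0 < K := hK
        calc I / (c ^ δ * Real.log 2) * (c ^ δ * Real.log 2)
            ≤ K * (c ^ δ * Real.log 2) :=
              mul_le_mul_of_nonneg_right hKb (by positivity)
          _ = K * c ^ δ * Real.log 2 := by ring
          _ ≤ K * (((2:ℝ) ^ j) ^ (δ:ℝ) * lam ^ (-δ)) * (Real.log lam ^ e) := by
              apply mul_le_mul (mul_le_mul_of_nonneg_left hcr hKK.le) hloge hlog2pos.le
              exact mul_nonneg hKK.le (by positivity)
      calc (∫ x in A j, g x) ≤ I := hFI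
        _ ≤ K * (((2:ℝ) ^ j) ^ (δ:ℝ) * lam ^ (-δ)) * (Real.log lam ^ e) := hIle
        _ ≤ K * ((2:ℝ) ^ j) ^ (δ:ℝ) * ((j:ℝ) + 1) * T := by
            rw [hTdef]
            have hj1 : (1:ℝ) ≤ (j:ℝ) + 1 := le_add_of_nonneg_left (Nat.cast_nonneg j)
            nlinarith [Real.rpow_pos_of_pos h2j (δ:ℝ), hrpowlam, hloge0, hK,
              mul_pos (Real.rpow_pos_of_pos h2j (δ:ℝ)) hrpowlam]
  -- decomposition of the integral over A n
  have hdec : ∀ n : ℕ, (∫ x in A n, h x) =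
      (∫ x in A 0, h x) + ∑ k ∈ Finset.range n, ∫ x in A (k+1) \ A k, h x := by
    intro n
    induction n with
    | zero => simp
    | succ n ih =>
      rw [Finset.sum_range_succ, ← add_assoc, ← ih]
      have hdiff := integral_diff (hAm n) (hhA _ (hAsub (n+1))) (hAmono n) (f := h)
      have : (∫ x in A (n+1) \ A n, h x) = (∫ x in A (n+1), h x) - ∫ x in A n, h x := hdiff
      linarith
  -- choose N with D ⊆ A N
  obtain ⟨N, hN⟩ := pow_unbounded_of_one_lt (R := ℝ)
    (lam * (2 * (‖ctr‖ + R))) (y := 2) one_lt_two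
  have hDA : Metric.ball ctr R = A N := by
    apply Set.Subset.antisymm _ (hAsub N)
    intro x hx
    refine ⟨hx, ?_⟩
    have hx1 : |x.1| ≤ ‖x‖ := by
      rw [Prod.norm_def]; exact le_max_left _ _
    have hx2 : |x.2| ≤ ‖x‖ := by
      rw [Prod.norm_def]; exact le_max_right _ _
    have hv1 : |v.1| ≤ 1 := by rw [← hv]; exact norm_fst_le v
    have hv2 : |v.2| ≤ 1 := by rw [← hv]; exact norm_snd_le v
    have hxn : ‖x‖ < ‖ctr‖ + R := by
      have h1 := Metric.mem_ball.mp hx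
      rw [dist_eq_norm] at h1
      have h2 := norm_sub_norm_le x ctr
      linarith
    have habs : |x.1 * v.1 + x.2 * v.2| ≤ 2 * (‖ctr‖ + R) := by
      calc |x.1 * v.1 + x.2 * v.2| ≤ |x.1 * v.1| + |x.2 * v.2| := abs_add_le _ _
        _ = |x.1| * |v.1| + |x.2| * |v.2| := by rw [abs_mul, abs_mul]
        _ ≤ |x.1| * 1 + |x.2| * 1 := by
            have := abs_nonneg x.1; have := abs_nonneg x.2
            gcongr
        _ = |x.1| + |x.2| := by ring
        _ ≤ ‖x‖ + ‖x‖ := by linarith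
        _ ≤ 2 * (‖ctr‖ + R) := by linarith
    have : 2 * (‖ctr‖ + R) < (2:ℝ) ^ N / lam := by
      rw [lt_div_iff₀ hlam0]
      calc 2 * (‖ctr‖ + R) * lam = lam * (2 * (‖ctr‖ + R)) := by ring
        _ < 2 ^ N := hN
    exact lt_of_le_of_lt habs this
  -- bound on each dyadic piece
  have hpiece : ∀ k : ℕ, (∫ x in A (k+1) \ A k, h x) ≤
      ((2:ℝ) ^ k) ^ (-(1/3:ℝ)) * ∫ x in A (k+1), g x := by
    intro k
    have hmeas : MeasurableSet (A (k+1) \ A k) := (hAm (k+1)).diff (hAm k)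
    have hsub : A (k+1) \ A k ⊆ Metric.ball ctr R :=
      Set.Subset.trans Set.diff_subset (hAsub (k+1))
    have step1 : (∫ x in A (k+1) \ A k, h x) ≤
        ∫ x in A (k+1) \ A k, ((2:ℝ) ^ k) ^ (-(1/3:ℝ)) * g x := by
      apply setIntegral_mono_on (hhA _ hsub)
        (((hgint.mono_set hsub)).const_mul _) hmeas
      intro x hx
      have hxD : x ∈ Metric.ball ctr R := hx.1.1
      have hxk : (2:ℝ) ^ k / lam ≤ |x.1 * v.1 + x.2 * v.2| := by
        by_contra hcon
        push_neg at hcon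
        exact hx.2 ⟨hxD, hcon⟩
      have h2k1 : (1:ℝ) ≤ (2:ℝ) ^ k := one_le_pow₀ (by norm_num)
      have hge : (2:ℝ) ^ k ≤ |lam * (x.1 * v.1 + x.2 * v.2)| := by
        rw [abs_mul, abs_of_pos hlam0]
        rw [div_le_iff₀ hlam0] at hxk
        linarith [hxk]
      have hminle : min 1 (|lam * (x.1 * v.1 + x.2 * v.2)| ^ (-(1 / 3 : ℝ))) ≤
          ((2:ℝ) ^ k) ^ (-(1/3:ℝ)) := by
        refine le_trans (min_le_right _ _) ?_
        exact Real.rpow_le_rpow_of_nonpos (by positivity) hge (by norm_num)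
      exact mul_le_mul_of_nonneg_right hminle (hg0 x)
    have step2 : (∫ x in A (k+1) \ A k, ((2:ℝ) ^ k) ^ (-(1/3:ℝ)) * g x) ≤
        ((2:ℝ) ^ k) ^ (-(1/3:ℝ)) * ∫ x in A (k+1), g x := by
      rw [MeasureTheory.integral_const_mul]
      apply mul_le_mul_of_nonneg_left _ (by positivity)
      apply setIntegral_mono_set (hgA (k+1)) ?_ (Set.diff_subset.eventuallyLE)
      filter_upwards with x using hg0 x
    exact le_trans step1 step2
  -- term identity
  have hterm : ∀ k : ℕ, ((2:ℝ) ^ k) ^ (-(1/3:ℝ)) * ((2:ℝ) ^ (k+1)) ^ (δ:ℝ) =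
      (2:ℝ) ^ (δ:ℝ) * q ^ k := by
    intro k
    rw [← Real.rpow_natCast (2:ℝ) k, ← Real.rpow_natCast (2:ℝ) (k+1),
      ← Real.rpow_natCast q k, hqdef,
      ← Real.rpow_mul (by norm_num : (0:ℝ) ≤ 2),
      ← Real.rpow_mul (by norm_num : (0:ℝ) ≤ 2),
      ← Real.rpow_mul (by norm_num : (0:ℝ) ≤ 2),
      ← Real.rpow_add (by norm_num : (0:ℝ) < 2),
      ← Real.rpow_add (by norm_num : (0:ℝ) < 2)]
    congr 1
    push_cast
    ring
  -- assemble
  have hsum : ∑ k ∈ Finset.range N, (((k:ℝ) + 2) * q ^ k) ≤ S :=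
    Summable.sum_le_tsum _ (fun k _ => by positivity) hsummable
  have hbound0 : (∫ x in A 0, h x) ≤ K * T := by
    calc (∫ x in A 0, h x) ≤ ∫ x in A 0, g x := by
          apply setIntegral_mono_on (hhA _ (hAsub 0)) (hgA 0) (hAm 0)
          intro x _; exact hhle x
      _ ≤ K * ((2:ℝ) ^ (0:ℕ)) ^ (δ:ℝ) * (((0:ℕ):ℝ) + 1) * T := keyF 0
      _ = K * T := by norm_num [Real.one_rpow]
  have hboundk : ∀ k : ℕ, ((2:ℝ) ^ k) ^ (-(1/3:ℝ)) * (∫ x in A (k+1), g x) ≤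
      K * (2:ℝ) ^ (δ:ℝ) * (((k:ℝ) + 2) * q ^ k) * T := by
    intro k
    have h1 : ((2:ℝ) ^ k) ^ (-(1/3:ℝ)) * (∫ x in A (k+1), g x) ≤
        ((2:ℝ) ^ k) ^ (-(1/3:ℝ)) * (K * ((2:ℝ) ^ (k+1)) ^ (δ:ℝ) * (((k:ℕ):ℝ) + 1 + 1) * T) := by
      apply mul_le_mul_of_nonneg_left _ (by positivity)
      have := keyF (k+1)
      push_cast at this ⊢
      linarith [this]
    refine le_trans h1 (le_of_eq ?_)
    linear_combination (K * ((k:ℝ) + 2) * T) * hterm k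
  calc (∫ x in Metric.ball ctr R, h x)
      = ∫ x in A N, h x := by rw [hDA]
    _ = (∫ x in A 0, h x) + ∑ k ∈ Finset.range N, ∫ x in A (k+1) \ A k, h x := hdec N
    _ ≤ K * T + ∑ k ∈ Finset.range N, K * (2:ℝ) ^ (δ:ℝ) * (((k:ℝ) + 2) * q ^ k) * T := by
        apply add_le_add hbound0
        apply Finset.sum_le_sum
        intro k _
        exact le_trans (hpiece k) (hboundk k)
    _ = K * T + K * (2:ℝ) ^ (δ:ℝ) * T * ∑ k ∈ Finset.range N, (((k:ℝ) + 2) * q ^ k) := by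
        rw [Finset.mul_sum]
        congr 1
        apply Finset.sum_congr rfl
        intro k _; ring
    _ ≤ K * T + K * (2:ℝ) ^ (δ:ℝ) * T * S := by
        apply add_le_add_right
        apply mul_le_mul_of_nonneg_left hsum (by positivity)
    _ = K * (1 + (2:ℝ) ^ (δ:ℝ) * S) * lam ^ (-δ) * Real.log lam ^ e := by
        rw [hTdef]; ring
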